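/- If a family of compact sets in ℝ^d has the property that every finite subfamily can be pierced by at most m k-flats (k-dimensional affine subspaces), then the whole family can be pierced by at most m k-flats. -/

import Mathlib

open Set Filter Module
open scoped RealInnerProductSpace

lemma exists_fun_range_eq {α : Type*} {P : Set α} {m : ℕ} (hf : P.Finite) (hn : P.Nonempty)
    (hm : P.ncard ≤ m) : ∃ f : Fin m → α, Set.range f = P := by
  classical
  have hc : 0 < P.ncard := Set.ncard_pos hf |>.mpr hn
  haveI : Fintype P := hf.fintype
  have hcard : Fintype.card P = P.ncard := by
    rw [Set.ncard_eq_toFinset_card']; simp [Set.toFinset_card]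
  obtain ⟨e⟩ : Nonempty (Fin P.ncard ≃ P) := by
    rw [← hcard]; exact ⟨(Fintype.equivFin P).symm⟩
  refine ⟨fun i => (e ⟨min i (P.ncard - 1), by omega⟩ : α), ?_⟩
  ext x; constructor
  · rintro ⟨i, rfl⟩; exact (e _).2
  · intro hx
    refine ⟨⟨e.symm ⟨x, hx⟩, by have := (e.symm ⟨x, hx⟩).2; omega⟩, ?_⟩
    have h2 : (⟨min ((e.symm ⟨x, hx⟩ : Fin _) : ℕ) (P.ncard - 1), by omega⟩ : Fin P.ncard)
        = e.symm ⟨x, hx⟩ := Fin.ext (by have := (e.symm ⟨x, hx⟩).2; simp; omega)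
    simp only [h2, Equiv.apply_symm_apply]

lemma ultrafilter_exists_fiber_mem {α β : Type*} [Finite β] (U : Ultrafilter α) (g : α → β) :
    ∃ b, {a | g a = b} ∈ U := by
  obtain ⟨b, hb⟩ := (U.map g).eq_pure_of_finite
  exact ⟨b, by have : {b} ∈ U.map g := by rw [hb]; exact rfl
               simpa [Ultrafilter.mem_map, Set.preimage, Set.mem_singleton_iff] using this⟩

lemma isCompact_orthonormal {d k : ℕ} :
    IsCompact {v : Fin k → EuclideanSpace ℝ (Fin d) | Orthonormal ℝ v} := by
  rw [Metric.isCompact_iff_isClosed_bounded]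
  constructor
  · have : {v : Fin k → EuclideanSpace ℝ (Fin d) | Orthonormal ℝ v} =
        ⋂ (i : Fin k) (j : Fin k), {v | ⟪v i, v j⟫ = if i = j then (1:ℝ) else 0} := by
      ext v; simp [orthonormal_iff_ite]
    rw [this]
    refine isClosed_iInter fun i => isClosed_iInter fun j => ?_
    exact isClosed_eq (Continuous.inner (continuous_apply i) (continuous_apply j))
      continuous_const
  · refine (Metric.isBounded_iff_subset_closedBall 0).mpr ⟨1, fun v hv => ?_⟩
    simp only [Metric.mem_closedBall, dist_zero_right]
    refine pi_norm_le_iff_of_nonneg zero_le_one |>.mpr fun i => ?_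
    simp [hv.1 i]

lemma exists_orthonormal_repr {d k : ℕ} (W : Submodule ℝ (EuclideanSpace ℝ (Fin d)))
    (h : finrank ℝ W = k) :
    ∃ v : Fin k → EuclideanSpace ℝ (Fin d), Orthonormal ℝ v ∧
      ∀ u ∈ W, u = ∑ j, ⟪v j, u⟫ • v j := by
  haveI : FiniteDimensional ℝ W := FiniteDimensional.finiteDimensional_submodule W
  let ob : OrthonormalBasis (Fin (finrank ℝ W)) ℝ W := stdOrthonormalBasis ℝ W
  let v : Fin k → EuclideanSpace ℝ (Fin d) := fun j => (ob (Fin.cast h.symm j) : _)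
  have hvo : Orthonormal ℝ v := by
    rw [orthonormal_iff_ite]
    intro i j
    have := (orthonormal_iff_ite.mp ob.orthonormal) (Fin.cast h.symm i) (Fin.cast h.symm j)
    rw [Submodule.coe_inner] at this
    simpa [v, Fin.ext_iff] using this
  refine ⟨v, hvo, fun u hu => ?_⟩
  have hrepr := ob.sum_repr ⟨u, hu⟩
  have hco : ∀ (x : W) i, ob.repr x i = ⟪(ob i : EuclideanSpace ℝ (Fin d)), (x : _)⟫ := by
    intro x i
    rw [ob.repr_apply_apply, Submodule.coe_inner]
  calc u = ((∑ i, ob.repr ⟨u, hu⟩ i • ob i : W) : EuclideanSpace ℝ (Fin d)) := by rw [hrepr]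
    _ = ∑ i, ob.repr ⟨u, hu⟩ i • (ob i : EuclideanSpace ℝ (Fin d)) := by push_cast; rfl
    _ = ∑ j, ⟪v j, u⟫ • v j := by
        refine Fintype.sum_equiv (finCongr h) _ _ fun i => ?_
        have hix : Fin.cast h.symm (finCongr h i) = i := by ext; simp
        rw [hco]
        simp [v, hix]

/-- A `k`-flat in `ℝ^d`: a nonempty affine subspace whose direction has dimension `k`. -/
def IsKFlat (d k : ℕ) (J : AffineSubspace ℝ (EuclideanSpace ℝ (Fin d))) : Prop :=
  (J : Set (EuclideanSpace ℝ (Fin d))).Nonempty ∧ Module.finrank ℝ J.direction = k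

/-- If every finite subfamily of a family of compact nonempty sets in `ℝ^d` can be pierced by
at most `m` `k`-flats, then the whole family can be pierced by at most `m` `k`-flats. -/
theorem compactness_piercing (d k m : ℕ) (F : Set (Set (EuclideanSpace ℝ (Fin d))))
    (hcomp : ∀ B ∈ F, IsCompact B) (hne : ∀ B ∈ F, B.Nonempty)
    (hfin : ∀ G ⊆ F, G.Finite →
      ∃ P : Set (AffineSubspace ℝ (EuclideanSpace ℝ (Fin d))),
        P.Finite ∧ P.ncard ≤ m ∧ (∀ J ∈ P, IsKFlat d k J) ∧
        ∀ B ∈ G, ∃ J ∈ P, (B ∩ (J : Set (EuclideanSpace ℝ (Fin d)))).Nonempty) :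
    ∃ P : Set (AffineSubspace ℝ (EuclideanSpace ℝ (Fin d))),
      P.Finite ∧ P.ncard ≤ m ∧ (∀ J ∈ P, IsKFlat d k J) ∧
      ∀ B ∈ F, ∃ J ∈ P, (B ∩ (J : Set (EuclideanSpace ℝ (Fin d)))).Nonempty := by
  classical
  rcases Set.eq_empty_or_nonempty F with rfl | ⟨B₀, hB₀⟩
  · obtain ⟨P, h1, h2, h3, _⟩ := hfin ∅ (empty_subset _) finite_empty
    exact ⟨P, h1, h2, h3, by simp⟩
  have hm0 : 0 < m := by
    obtain ⟨P, hPf, hPc, _, hPp⟩ := hfin {B₀} (by simpa) (finite_singleton _)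
    obtain ⟨Jx, hJx, _⟩ := hPp B₀ rfl
    have : 0 < P.ncard := (Set.ncard_pos hPf).mpr ⟨Jx, hJx⟩
    omega
  let b₀ : ↥F := ⟨B₀, hB₀⟩
  -- family data for each finite subfamily
  have key : ∀ G : Finset F, ∃ J : Fin m → AffineSubspace ℝ (EuclideanSpace ℝ (Fin d)),
      (∀ i, IsKFlat d k (J i)) ∧
      ∀ b : F, b ∈ insert b₀ G → ∃ i, ((b : Set (EuclideanSpace ℝ (Fin d))) ∩ (J i : Set (EuclideanSpace ℝ (Fin d)))).Nonempty := by
    intro G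
    have hsub : (Subtype.val '' (↑(insert b₀ G) : Set ↥F)) ⊆ F := by
      rintro B ⟨b, _, rfl⟩; exact b.2
    obtain ⟨P, hPf, hPc, hPk, hPp⟩ := hfin _ hsub ((Set.toFinite _).image _)
    have hPn : P.Nonempty := by
      obtain ⟨Jx, hJx, _⟩ := hPp B₀ ⟨b₀, by simp, rfl⟩
      exact ⟨Jx, hJx⟩
    obtain ⟨J, hJr⟩ := exists_fun_range_eq hPf hPn hPc
    refine ⟨J, fun i => hPk _ (hJr ▸ mem_range_self i), fun b hb => ?_⟩
    obtain ⟨Jp, hJp, hne'⟩ := hPp ↑b ⟨b, by simpa using hb, rfl⟩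
    rw [← hJr] at hJp; obtain ⟨i, rfl⟩ := hJp
    exact ⟨i, hne'⟩
  choose J hJk hJp using key
  -- index function
  let idx : Finset F → ↥F → Fin m := fun G b =>
    if h : ∃ i, ((b : Set (EuclideanSpace ℝ (Fin d))) ∩ (J G i : Set (EuclideanSpace ℝ (Fin d)))).Nonempty then h.choose else ⟨0, hm0⟩
  have hidx : ∀ G (b : ↥F), b ∈ insert b₀ G →
      ((b : Set (EuclideanSpace ℝ (Fin d))) ∩ (J G (idx G b) : Set (EuclideanSpace ℝ (Fin d)))).Nonempty := by
    intro G b hb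
    have h := hJp G b hb
    simp only [idx, dif_pos h]
    exact h.choose_spec
  -- ultrafilter extending the sections filter
  let U : Ultrafilter (Finset ↥F) := Ultrafilter.of atTop
  have hU : (U : Filter (Finset ↥F)) ≤ atTop := Ultrafilter.of_le _
  -- limit index for each member
  have hf0 : ∀ b : ↥F, ∃ i, {G | idx G b = i} ∈ U :=
    fun b => ultrafilter_exists_fiber_mem U fun G => idx G b
  choose f hfm using hf0
  -- representative member for each used index
  let bi : Fin m → ↥F := fun i => if h : ∃ b, f b = i then h.choose else b₀
  have hbi : ∀ i ∈ Set.range f, f (bi i) = i := by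
    rintro i ⟨b, rfl⟩
    have h : ∃ b', f b' = f b := ⟨b, rfl⟩
    simp only [bi, dif_pos h]
    exact h.choose_spec
  -- orthonormal frames for each flat's direction
  have hv0 : ∀ (G : Finset F) (i : Fin m), ∃ v : Fin k → (EuclideanSpace ℝ (Fin d)), Orthonormal ℝ v ∧
      ∀ u ∈ (J G i).direction, u = ∑ j, ⟪v j, u⟫ • v j :=
    fun G i => exists_orthonormal_repr _ (hJk G i).2
  choose v hvo hvrepr using hv0
  -- base points
  choose pt hpt using fun b : ↥F => hne ↑b b.2
  -- intersection points with the representative member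
  let q : Fin m → Finset F → (EuclideanSpace ℝ (Fin d)) := fun i G =>
    if hg : (((bi i : Set (EuclideanSpace ℝ (Fin d)))) ∩ (J G (f (bi i)) : Set (EuclideanSpace ℝ (Fin d)))).Nonempty then hg.choose else pt (bi i)
  have hqb : ∀ i G, q i G ∈ (bi i : Set (EuclideanSpace ℝ (Fin d))) := by
    intro i G
    by_cases hg : (((bi i : Set (EuclideanSpace ℝ (Fin d)))) ∩ (J G (f (bi i)) : Set (EuclideanSpace ℝ (Fin d)))).Nonempty
    · simp only [q, dif_pos hg]; exact hg.choose_spec.1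
    · simp only [q, dif_neg hg]; exact hpt _
  have hqJ : ∀ i G, bi i ∈ G → idx G (bi i) = f (bi i) →
      q i G ∈ (J G (f (bi i)) : Set (EuclideanSpace ℝ (Fin d))) := by
    intro i G hmem hidxeq
    have hg : (((bi i : Set (EuclideanSpace ℝ (Fin d)))) ∩ (J G (f (bi i)) : Set (EuclideanSpace ℝ (Fin d)))).Nonempty := by
      rw [← hidxeq]
      exact hidx G (bi i) (Finset.mem_insert_of_mem hmem)
    simp only [q, dif_pos hg]
    exact hg.choose_spec.2
  -- limits along the ultrafilter
  have hlim0 : ∀ i : Fin m, ∃ (p : (EuclideanSpace ℝ (Fin d))) (w : Fin k → (EuclideanSpace ℝ (Fin d))), p ∈ (bi i : Set (EuclideanSpace ℝ (Fin d))) ∧ Orthonormal ℝ w ∧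
      Tendsto (fun G => (q i G, v G (f (bi i)))) U (nhds (p, w)) := by
    intro i
    have hK : IsCompact ((bi i : Set (EuclideanSpace ℝ (Fin d))) ×ˢ {v : Fin k → (EuclideanSpace ℝ (Fin d)) | Orthonormal ℝ v}) :=
      (hcomp _ (bi i).2).prod isCompact_orthonormal
    have hmem : ((bi i : Set (EuclideanSpace ℝ (Fin d))) ×ˢ {v : Fin k → (EuclideanSpace ℝ (Fin d)) | Orthonormal ℝ v}) ∈
        U.map (fun G => (q i G, v G (f (bi i)))) := by
      refine Ultrafilter.mem_map.mpr (U.sets_of_superset univ_mem ?_)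
      intro G _
      exact ⟨hqb i G, hvo G _⟩
    obtain ⟨⟨p, w⟩, hpw, hle⟩ := hK.ultrafilter_le_nhds _ (le_principal_iff.mpr hmem)
    exact ⟨p, w, hpw.1, hpw.2, hle⟩
  choose p w hpmem hworth hlim using hlim0
  -- the piercing flats
  let L : Fin m → AffineSubspace ℝ (EuclideanSpace ℝ (Fin d)) := fun i =>
    AffineSubspace.mk' (p i) (Submodule.span ℝ (Set.range (w i)))
  refine ⟨L '' (Set.range f), ((Set.toFinite (Set.range f)).image L), ?_, ?_, ?_⟩
  · calc (L '' (Set.range f)).ncard ≤ (Set.range f).ncard := Set.ncard_image_le (Set.toFinite (Set.range f))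
      _ ≤ (Set.univ : Set (Fin m)).ncard := Set.ncard_le_ncard (subset_univ _) (Set.finite_univ)
      _ = m := by rw [Set.ncard_univ]; simp
  · rintro Jx ⟨i, hi, rfl⟩
    refine ⟨⟨p i, AffineSubspace.self_mem_mk' _ _⟩, ?_⟩
    rw [AffineSubspace.direction_mk']
    rw [finrank_span_eq_card (hworth i).linearIndependent]
    simp
  · intro B hB
    set b : ↥F := ⟨B, hB⟩ with hb
    set i : Fin m := f b with hi
    refine ⟨L i, ⟨i, ⟨b, rfl⟩, rfl⟩, ?_⟩
    have hbieq : f (bi i) = i := hbi i ⟨b, rfl⟩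
    -- intersection points with B
    let xg : Finset F → (EuclideanSpace ℝ (Fin d)) := fun G =>
      if hg : (B ∩ (J G i : Set (EuclideanSpace ℝ (Fin d)))).Nonempty then hg.choose else pt b
    have hxB : ∀ G, xg G ∈ B := by
      intro G
      by_cases hg : (B ∩ (J G i : Set (EuclideanSpace ℝ (Fin d)))).Nonempty
      · simp only [xg, dif_pos hg]; exact hg.choose_spec.1
      · simp only [xg, dif_neg hg]; exact hpt b
    have hxJ : ∀ G, b ∈ G → idx G b = i → xg G ∈ (J G i : Set (EuclideanSpace ℝ (Fin d))) := by
      intro G hmem hidxeq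
      have hg : (B ∩ (J G i : Set (EuclideanSpace ℝ (Fin d)))).Nonempty := by
        rw [← hidxeq]
        exact hidx G b (Finset.mem_insert_of_mem hmem)
      simp only [xg, dif_pos hg]
      exact hg.choose_spec.2
    -- limit of xg
    obtain ⟨x, hxmem, hxlim⟩ : ∃ x ∈ B, Tendsto xg U (nhds x) := by
      have hmem : B ∈ U.map xg := by
        refine Ultrafilter.mem_map.mpr (U.sets_of_superset univ_mem ?_)
        intro G _; exact hxB G
      obtain ⟨x, hx, hle⟩ := (hcomp B hB).ultrafilter_le_nhds _ (le_principal_iff.mpr hmem)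
      exact ⟨x, hx, hle⟩
    -- the defect map
    let Ψ : ((EuclideanSpace ℝ (Fin d)) × (Fin k → (EuclideanSpace ℝ (Fin d)))) × (EuclideanSpace ℝ (Fin d)) → (EuclideanSpace ℝ (Fin d)) := fun z =>
      (z.2 - z.1.1) - ∑ j, ⟪z.1.2 j, z.2 - z.1.1⟫ • z.1.2 j
    have hΨc : Continuous Ψ := by
      have h1 : Continuous fun z : ((EuclideanSpace ℝ (Fin d)) × (Fin k → (EuclideanSpace ℝ (Fin d)))) × (EuclideanSpace ℝ (Fin d)) => z.2 - z.1.1 :=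
        continuous_snd.sub (continuous_fst.fst)
      refine h1.sub (continuous_finset_sum _ fun j _ => ?_)
      exact (Continuous.inner (𝕜 := ℝ) ((continuous_apply j).comp continuous_fst.snd) h1).smul
        ((continuous_apply j).comp continuous_fst.snd)
    -- eventually the defect is zero
    have hev : ∀ᶠ G in (U : Filter (Finset F)),
        Ψ ((q i G, v G (f (bi i))), xg G) = 0 := by
      have hS : {G : Finset F | b ∈ G ∧ bi i ∈ G} ∈ (U : Filter (Finset F)) := by
        refine hU ?_
        refine mem_atTop_sets.mpr ⟨{b, bi i}, fun G hG => ?_⟩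
        constructor
        · exact hG (Finset.mem_insert_self _ _)
        · exact hG (Finset.mem_insert_of_mem (Finset.mem_singleton_self _))
      have hS2 : {G : Finset F | idx G b = i} ∈ (U : Filter (Finset F)) := hfm b
      have hS3 : {G : Finset F | idx G (bi i) = f (bi i)} ∈ (U : Filter (Finset F)) := hfm (bi i)
      filter_upwards [hS, hS2, hS3] with G hG hG2 hG3
      obtain ⟨hbG, hbiG⟩ := hG
      have hx : xg G ∈ (J G i : Set (EuclideanSpace ℝ (Fin d))) := hxJ G hbG hG2
      have hq' : q i G ∈ (J G i : Set (EuclideanSpace ℝ (Fin d))) := by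
        have := hqJ i G hbiG hG3
        rwa [hbieq] at this
      have hdir : xg G - q i G ∈ (J G i).direction := by
        have := AffineSubspace.vsub_mem_direction hx hq'
        simpa using this
      have hrep := hvrepr G i _ hdir
      simp only [Ψ, hbieq]
      rw [← hrep]
      simp
    -- pass to the limit
    have hlimpair : Tendsto (fun G => ((q i G, v G (f (bi i))), xg G)) U
        (nhds ((p i, w i), x)) := (hlim i).prodMk_nhds hxlim
    have hzero : Ψ ((p i, w i), x) = 0 := by
      have h1 : Tendsto (fun G => Ψ ((q i G, v G (f (bi i))), xg G)) U
          (nhds (Ψ ((p i, w i), x))) := (hΨc.tendsto _).comp hlimpair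
      have h2 : Tendsto (fun G => Ψ ((q i G, v G (f (bi i))), xg G)) U (nhds 0) := by
        rw [tendsto_congr' hev]; exact tendsto_const_nhds
      exact tendsto_nhds_unique h1 h2
    have hxspan : x - p i ∈ Submodule.span ℝ (Set.range (w i)) := by
      have : x - p i = ∑ j, ⟪w i j, x - p i⟫ • w i j := by
        have := sub_eq_zero.mp hzero
        simpa [Ψ] using this
      rw [this]
      exact Submodule.sum_mem _ fun j _ =>
        Submodule.smul_mem _ _ (Submodule.subset_span (mem_range_self j))
    refine ⟨x, hxmem, ?_⟩
    show x ∈ L i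
    rw [AffineSubspace.mem_mk']
    simpa using hxspan
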